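/- Let M ≥ 1, K ≥ 2, ρ > 0, R_M > 0, R_U > 0, ε_M = 2^{R_M} − 1, ε_U = 2^{R_U} − 1. Let z ~ Gamma(M,1) and u ~ Exp(K−1) be independent, and let P_N = P( z · max{0, min{f(z), f(u)}} < ε_U/ρ ) be the NOMA unicasting outage probability. Set φ = ε_M/ρ + ε_U(1+ε_M)/ρ, ψ = ε_U(1+ε_M)/ρ, a = 1/(ψ + ε_M/ρ), b = ρ/ε_M, and F̃(x) = Γ(M, 1/x)/(M−1)! for x > 0 (with F̃(x) = 0 for x ≤ 0). Then P_N = Q₁ + Q₂ + Q₃, where Q₁ = 1 − (Γ(M, ε_M/ρ)/(M−1)!) · e^{−(K−1)ε_M/ρ}, Q₂ = (γ(M, Kφ) − γ(M, K ε_M/ρ)) / ((M−1)! K^M), and Q₃ = ∫_a^b [ F̃(x) − F̃( 1/ψ − (ε_M/(ρψ)) x ) ] · ((K−1)/x²) e^{−(K−1)/x} dx. -/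

import Mathlib

open Real MeasureTheory ProbabilityTheory Set
open scoped ENNReal

namespace NomaAux




noncomputable def gInt (n : ℕ) : ℝ → ℝ := fun s => s ^ n * Real.exp (-s)

lemma gInt_cont (n : ℕ) : Continuous (gInt n) := by
  unfold gInt; continuity

lemma gInt_integrableOn_Ioi (n : ℕ) (t : ℝ) : IntegrableOn (gInt n) (Ioi t) := by
  have h0 : IntegrableOn (gInt n) (Ioi 0) := by
    have := Real.GammaIntegral_convergent (s := (n : ℝ) + 1) (by positivity)
    refine (this.congr_fun ?_ measurableSet_Ioi)
    intro x hx
    simp only [gInt, add_sub_cancel_right]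
    rw [Real.rpow_natCast, mul_comm]
  have h1 : IntegrableOn (gInt n) (Ioc t 0) := by
    refine ((gInt_cont n).continuousOn.integrableOn_Icc).mono_set Ioc_subset_Icc_self
  have h2 : Ioi t ⊆ Ioc t 0 ∪ Ioi 0 := by
    intro s hs
    rcases le_or_gt s 0 with h | h
    · exact Or.inl ⟨hs, h⟩
    · exact Or.inr h
  exact ((h1.union h0).mono_set h2)

noncomputable def Gup (n : ℕ) : ℝ → ℝ := fun t => ∫ s in Ioi t, gInt n s

lemma Gup_eq_sub (n : ℕ) (t : ℝ) : Gup n t = Gup n 0 - ∫ s in (0:ℝ)..t, gInt n s := by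
  rcases le_or_gt 0 t with h | h
  · have hsplit : Ioi (0:ℝ) = Ioc 0 t ∪ Ioi t := (Ioc_union_Ioi_eq_Ioi h).symm
    have hd : Disjoint (Ioc (0:ℝ) t) (Ioi t) := Ioc_disjoint_Ioi le_rfl
    have := setIntegral_union hd measurableSet_Ioi
      ((gInt_integrableOn_Ioi n 0).mono_set Ioc_subset_Ioi_self)
      (gInt_integrableOn_Ioi n t)
    rw [intervalIntegral.integral_of_le h]
    unfold Gup
    rw [hsplit, this]; ring
  · have hsplit : Ioi t = Ioc t 0 ∪ Ioi 0 := (Ioc_union_Ioi_eq_Ioi h.le).symm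
    have hd : Disjoint (Ioc t (0:ℝ)) (Ioi (0:ℝ)) := Ioc_disjoint_Ioi le_rfl
    have := setIntegral_union hd measurableSet_Ioi
      ((gInt_integrableOn_Ioi n t).mono_set Ioc_subset_Ioi_self)
      (gInt_integrableOn_Ioi n 0)
    rw [intervalIntegral.integral_of_ge h.le]
    unfold Gup
    rw [hsplit, this]; ring

lemma Gup_continuous (n : ℕ) : Continuous (Gup n) := by
  have : Gup n = fun t => Gup n 0 - ∫ s in (0:ℝ)..t, gInt n s := funext (Gup_eq_sub n)
  rw [this]
  exact continuous_const.sub (intervalIntegral.continuous_primitive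
    (fun a b => ((gInt_cont n).intervalIntegrable a b)) 0)

lemma Gup_nonneg (n : ℕ) {t : ℝ} (ht : 0 ≤ t) : 0 ≤ Gup n t := by
  refine setIntegral_nonneg measurableSet_Ioi (fun s hs => ?_)
  have : (0:ℝ) ≤ s := le_trans ht (le_of_lt hs)
  unfold gInt; positivity

lemma Gup_anti (n : ℕ) {u v : ℝ} (hu : 0 ≤ u) (huv : u ≤ v) : Gup n v ≤ Gup n u := by
  refine setIntegral_mono_set (gInt_integrableOn_Ioi n u) ?_ ?_
  · rw [Filter.EventuallyLE, ae_restrict_iff' measurableSet_Ioi]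
    refine ae_of_all _ (fun s hs => ?_)
    have : (0:ℝ) ≤ s := le_trans hu (le_of_lt hs)
    unfold gInt; simp only [Pi.zero_apply]; positivity
  · exact ae_of_all _ (Ioi_subset_Ioi huv)

lemma Gup_le (n : ℕ) {t : ℝ} (ht : 0 ≤ t) : Gup n t ≤ Gup n 0 := Gup_anti n le_rfl ht


lemma gammaPDF_pos_eq (M : ℕ) (hM : 1 ≤ M) {x : ℝ} (hx : 0 ≤ x) :
    gammaPDF M 1 x = ENNReal.ofReal (gInt (M - 1) x / (M - 1).factorial) := by
  rw [gammaPDF_of_nonneg hx]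
  congr 1
  have hcast : ((M : ℝ) - 1) = ((M - 1 : ℕ) : ℝ) := by
    have : (M : ℝ) = ((M - 1 : ℕ) : ℝ) + 1 := by
      rw [← Nat.cast_one (R := ℝ), ← Nat.cast_add, Nat.sub_add_cancel hM]
    rw [this]; ring
  have hG : Real.Gamma (M : ℝ) = (M - 1).factorial := by
    have : (M : ℝ) = ((M - 1 : ℕ) : ℝ) + 1 := by
      rw [← Nat.cast_one (R := ℝ), ← Nat.cast_add, Nat.sub_add_cancel hM]
    rw [this, Real.Gamma_nat_eq_factorial]
  rw [hG, hcast, Real.rpow_natCast, Real.rpow_natCast, one_pow]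
  unfold gInt
  rw [one_mul]
  ring

lemma gammaMeasure_Ioi (M : ℕ) (hM : 1 ≤ M) {t : ℝ} (ht : 0 ≤ t) :
    gammaMeasure M 1 (Ioi t) = ENNReal.ofReal (Gup (M - 1) t / (M - 1).factorial) := by
  rw [gammaMeasure, withDensity_apply _ measurableSet_Ioi]
  rw [setLIntegral_congr_fun measurableSet_Ioi (
    (fun x (hx : x ∈ Ioi t) => gammaPDF_pos_eq M hM (le_trans ht hx.le)))]
  rw [← ofReal_integral_eq_lintegral_ofReal
    (((gInt_integrableOn_Ioi (M-1) t)).div_const _)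
    ((ae_restrict_iff' measurableSet_Ioi).mpr (ae_of_all _ (fun s hs => by
      have h0 : (0:ℝ) ≤ s := le_trans ht (le_of_lt hs)
      have : 0 ≤ gInt (M-1) s := by unfold gInt; positivity
      positivity)))]
  rw [integral_div]
  rfl

lemma gammaMeasure_singleton (a r x : ℝ) : gammaMeasure a r {x} = 0 := by
  rw [gammaMeasure, withDensity_apply _ (measurableSet_singleton x)]
  exact setLIntegral_measure_zero _ _ (measure_singleton x)

lemma measure_Ici_eq_Ioi (ν : Measure ℝ) (hsing : ∀ x : ℝ, ν {x} = 0) (t : ℝ) :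
    ν (Ici t) = ν (Ioi t) := by
  rw [← Set.Ioi_union_left, measure_union (by simp) (measurableSet_singleton t),
    hsing t, add_zero]

lemma gammaMeasure_Ici (M : ℕ) (hM : 1 ≤ M) {t : ℝ} (ht : 0 ≤ t) :
    gammaMeasure M 1 (Ici t) = ENNReal.ofReal (Gup (M - 1) t / (M - 1).factorial) := by
  rw [measure_Ici_eq_Ioi _ (gammaMeasure_singleton _ _) t, gammaMeasure_Ioi M hM ht]

lemma gammaMeasure_Ioo (M : ℕ) (hM : 1 ≤ M) {u v : ℝ} (hu : 0 < u) (huv : u < v) :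
    gammaMeasure M 1 (Ioo u v) =
      ENNReal.ofReal ((Gup (M - 1) u - Gup (M - 1) v) / (M - 1).factorial) := by
  have hIoo : Ioo u v = Ioi u \ Ici v := by
    ext s; simp only [mem_Ioo, mem_diff, mem_Ioi, mem_Ici, not_le]
  rw [hIoo, measure_diff (Ici_subset_Ioi.mpr huv) measurableSet_Ici.nullMeasurableSet
    (by rw [gammaMeasure_Ici M hM (le_trans hu.le huv.le)]; exact ENNReal.ofReal_ne_top),
    gammaMeasure_Ioi M hM hu.le, gammaMeasure_Ici M hM (le_trans hu.le huv.le)]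
  rw [sub_div, ENNReal.ofReal_sub _
    (div_nonneg (Gup_nonneg (M-1) (le_trans hu.le huv.le)) (Nat.cast_nonneg _))]

lemma expPDF_pos_eq (r : ℝ) {x : ℝ} (hx : 0 ≤ x) :
    gammaPDF 1 r x = ENNReal.ofReal (r * Real.exp (-(r * x))) := by
  rw [gammaPDF_of_nonneg hx]
  congr 1
  rw [Real.Gamma_one, sub_self, Real.rpow_zero, Real.rpow_one]
  ring

lemma expMeasure_Ioi {r : ℝ} (hr : 0 < r) {t : ℝ} (ht : 0 ≤ t) :
    expMeasure r (Ioi t) = ENNReal.ofReal (Real.exp (-(r * t))) := by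
  haveI := isProbabilityMeasure_expMeasure hr
  have hIic : expMeasure r (Iic t) = ENNReal.ofReal (1 - Real.exp (-(r * t))) := by
    have h1 : (expMeasure r (Iic t)).toReal = 1 - Real.exp (-(r * t)) := by
      have := cdf_expMeasure_eq hr t
      rw [if_pos ht] at this
      rw [← this, cdf_eq_real, measureReal_def]
    rw [← h1, ENNReal.ofReal_toReal (measure_ne_top _ _)]
  have hcompl : Ioi t = (Iic t)ᶜ := by simp
  rw [hcompl, prob_compl_eq_one_sub measurableSet_Iic, hIic]
  have he : Real.exp (-(r * t)) ≤ 1 := by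
    rw [Real.exp_le_one_iff]; nlinarith
  have h2 : (1 : ℝ≥0∞) = ENNReal.ofReal 1 := ENNReal.ofReal_one.symm
  rw [h2, ← ENNReal.ofReal_sub _ (by linarith [Real.exp_pos (-(r*t))])]
  norm_num

lemma expMeasure_Ici {r : ℝ} (hr : 0 < r) {t : ℝ} (ht : 0 ≤ t) :
    expMeasure r (Ici t) = ENNReal.ofReal (Real.exp (-(r * t))) := by
  rw [expMeasure, measure_Ici_eq_Ioi _ (gammaMeasure_singleton _ _) t, ← expMeasure,
    expMeasure_Ioi hr ht]


lemma measure_S2 (M : ℕ) (hM : 1 ≤ M) {r : ℝ} (hr : 0 < r) {t0 φ : ℝ}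
    (h0 : 0 < t0) (h1 : t0 < φ) :
    ((gammaMeasure M 1).prod (expMeasure r)) {p : ℝ × ℝ | t0 < p.1 ∧ p.1 < φ ∧ p.1 ≤ p.2}
      = ENNReal.ofReal (∫ z in Ioo t0 φ,
          gInt (M - 1) z / (M - 1).factorial * Real.exp (-(r * z))) := by
  haveI := isProbabilityMeasure_expMeasure hr
  have hs : MeasurableSet {p : ℝ × ℝ | t0 < p.1 ∧ p.1 < φ ∧ p.1 ≤ p.2} := by
    refine MeasurableSet.inter ?_ (MeasurableSet.inter ?_ ?_)
    · exact measurableSet_lt measurable_const measurable_fst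
    · exact measurableSet_lt measurable_fst measurable_const
    · exact measurableSet_le measurable_fst measurable_snd
  rw [Measure.prod_apply hs]
  have hslice : ∀ z : ℝ, expMeasure r (Prod.mk z ⁻¹'
      {p : ℝ × ℝ | t0 < p.1 ∧ p.1 < φ ∧ p.1 ≤ p.2}) =
      (Ioo t0 φ).indicator (fun z => ENNReal.ofReal (Real.exp (-(r * z)))) z := by
    intro z
    by_cases hz : z ∈ Ioo t0 φ
    · have hpre : Prod.mk z ⁻¹' {p : ℝ × ℝ | t0 < p.1 ∧ p.1 < φ ∧ p.1 ≤ p.2} = Ici z := by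
        ext u; simp [hz.1, hz.2, Set.mem_Ici]
      rw [hpre, expMeasure_Ici hr (le_trans h0.le hz.1.le), indicator_of_mem hz]
    · have hpre : Prod.mk z ⁻¹' {p : ℝ × ℝ | t0 < p.1 ∧ p.1 < φ ∧ p.1 ≤ p.2} = ∅ := by
        ext u
        simp only [mem_preimage, mem_setOf_eq, mem_empty_iff_false, iff_false, not_and]
        intro hz1 hz2
        exact absurd ⟨hz1, hz2⟩ hz
      rw [hpre, measure_empty, indicator_of_notMem hz]
  rw [lintegral_congr hslice, lintegral_indicator measurableSet_Ioo]
  have hpdfm : Measurable (gammaPDF (M:ℝ) 1) :=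
    (measurable_gammaPDFReal _ _).ennreal_ofReal
  rw [gammaMeasure, setLIntegral_withDensity_eq_setLIntegral_mul _
    hpdfm (by fun_prop) measurableSet_Ioo]
  have hcong : ∀ z ∈ Ioo t0 φ,
      (gammaPDF (M : ℝ) 1 * fun a => ENNReal.ofReal (Real.exp (-(r * a)))) z
      = ENNReal.ofReal (gInt (M - 1) z / (M - 1).factorial * Real.exp (-(r * z))) := by
    intro z hz
    have hz0 : (0:ℝ) ≤ z := le_trans h0.le hz.1.le
    have hnn : 0 ≤ gInt (M - 1) z := by unfold gInt; positivity
    simp only [Pi.mul_apply]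
    rw [gammaPDF_pos_eq M hM hz0, ← ENNReal.ofReal_mul (by positivity)]
  rw [setLIntegral_congr_fun measurableSet_Ioo hcong]
  rw [← ofReal_integral_eq_lintegral_ofReal]
  · refine IntegrableOn.mono_set ?_ (Ioo_subset_Icc_self)
    apply ContinuousOn.integrableOn_Icc
    exact (((gInt_cont (M-1)).div_const _).mul (by continuity)).continuousOn
  · rw [Filter.EventuallyLE, ae_restrict_iff' measurableSet_Ioo]
    refine ae_of_all _ (fun z hz => ?_)
    have hz0 : (0:ℝ) ≤ z := le_trans h0.le hz.1.le
    have : 0 ≤ gInt (M - 1) z := by unfold gInt; positivity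
    simp only [Pi.zero_apply]
    positivity



lemma measure_S3 (M : ℕ) (hM : 1 ≤ M) {r : ℝ} (hr : 0 < r) {t0 ψ : ℝ}
    (h0 : 0 < t0) (hψ : 0 < ψ) :
    ((gammaMeasure M 1).prod (expMeasure r))
      {p : ℝ × ℝ | t0 < p.2 ∧ p.2 < p.1 ∧ p.1 * (p.2 - t0) < ψ * p.2}
      = ENNReal.ofReal (∫ u in Ioo t0 (t0 + ψ),
          (Gup (M - 1) u - Gup (M - 1) (ψ * u / (u - t0))) / (M - 1).factorial
            * (r * Real.exp (-(r * u)))) := by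
  haveI := isProbabilityMeasure_gammaMeasure (show (0:ℝ) < (M:ℝ) by exact_mod_cast Nat.lt_of_lt_of_le Nat.zero_lt_one hM) one_pos
  have hs : MeasurableSet {p : ℝ × ℝ | t0 < p.2 ∧ p.2 < p.1 ∧ p.1 * (p.2 - t0) < ψ * p.2} := by
    refine MeasurableSet.inter ?_ (MeasurableSet.inter ?_ ?_)
    · exact measurableSet_lt measurable_const measurable_snd
    · exact measurableSet_lt measurable_snd measurable_fst
    · exact measurableSet_lt (measurable_fst.mul (measurable_snd.sub measurable_const))
        (measurable_const.mul measurable_snd)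
  haveI := isProbabilityMeasure_expMeasure hr
  rw [Measure.prod_apply_symm hs]
  set G0 : ℝ → ℝ := fun u =>
    (Gup (M - 1) u - Gup (M - 1) (ψ * u / (u - t0))) / (M - 1).factorial with hG0
  have hslice : ∀ u : ℝ, gammaMeasure M 1 ((fun z => (z, u)) ⁻¹'
      {p : ℝ × ℝ | t0 < p.2 ∧ p.2 < p.1 ∧ p.1 * (p.2 - t0) < ψ * p.2}) =
      (Ioo t0 (t0 + ψ)).indicator (fun u => ENNReal.ofReal (G0 u)) u := by
    intro u
    by_cases hu : u ∈ Ioo t0 (t0 + ψ)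
    · have hut : 0 < u - t0 := by linarith [hu.1]
      have hpre : ((fun z => (z, u)) ⁻¹'
          {p : ℝ × ℝ | t0 < p.2 ∧ p.2 < p.1 ∧ p.1 * (p.2 - t0) < ψ * p.2})
          = Ioo u (ψ * u / (u - t0)) := by
        ext z
        simp only [mem_preimage, mem_setOf_eq, mem_Ioo, hu.1, true_and]
        rw [lt_div_iff₀ hut]
      have huh : u < ψ * u / (u - t0) := by
        rw [lt_div_iff₀ hut]
        nlinarith [hu.2, h0.trans hu.1]
      rw [hpre, gammaMeasure_Ioo M hM (h0.trans hu.1) huh, indicator_of_mem hu]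
    · have hpre : gammaMeasure M 1 ((fun z => (z, u)) ⁻¹'
          {p : ℝ × ℝ | t0 < p.2 ∧ p.2 < p.1 ∧ p.1 * (p.2 - t0) < ψ * p.2}) = 0 := by
        by_cases hu1 : t0 < u
        · have hu2 : t0 + ψ ≤ u := by
            by_contra hc
            exact hu ⟨hu1, lt_of_not_ge hc⟩
          have hut : 0 < u - t0 := by linarith
          have hpre2 : ((fun z => (z, u)) ⁻¹'
              {p : ℝ × ℝ | t0 < p.2 ∧ p.2 < p.1 ∧ p.1 * (p.2 - t0) < ψ * p.2})
              = Ioo u (ψ * u / (u - t0)) := by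
            ext z
            simp only [mem_preimage, mem_setOf_eq, mem_Ioo, hu1, true_and]
            rw [lt_div_iff₀ hut]
          have hempty : Ioo u (ψ * u / (u - t0)) = ∅ := by
            refine Ioo_eq_empty (not_lt.mpr ?_)
            rw [div_le_iff₀ hut]
            nlinarith [h0.trans hu1]
          rw [hpre2, hempty, measure_empty]
        · have hpre2 : ((fun z => (z, u)) ⁻¹'
              {p : ℝ × ℝ | t0 < p.2 ∧ p.2 < p.1 ∧ p.1 * (p.2 - t0) < ψ * p.2}) = ∅ := by
            ext z
            simp only [mem_preimage, mem_setOf_eq, mem_empty_iff_false, iff_false, not_and]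
            intro h; exact absurd h hu1
          rw [hpre2, measure_empty]
      rw [hpre, indicator_of_notMem hu]
  rw [lintegral_congr hslice, lintegral_indicator measurableSet_Ioo]
  have hpdfm : Measurable (gammaPDF (1:ℝ) r) :=
    (measurable_gammaPDFReal _ _).ennreal_ofReal
  have hGm : Measurable G0 := by
    have h1 : Measurable (Gup (M-1)) := (Gup_continuous (M-1)).measurable
    have h2 : Measurable fun u : ℝ => ψ * u / (u - t0) := by fun_prop
    exact ((h1.sub (h1.comp h2)).div_const _)
  rw [expMeasure, gammaMeasure, setLIntegral_withDensity_eq_setLIntegral_mul _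
    hpdfm (hGm.ennreal_ofReal) measurableSet_Ioo]
  have hcong : ∀ u ∈ Ioo t0 (t0 + ψ),
      (gammaPDF (1:ℝ) r * fun u => ENNReal.ofReal (G0 u)) u
      = ENNReal.ofReal (G0 u * (r * Real.exp (-(r * u)))) := by
    intro u hu
    have hu0 : (0:ℝ) ≤ u := le_trans h0.le hu.1.le
    simp only [Pi.mul_apply]
    rw [expPDF_pos_eq r hu0, ← ENNReal.ofReal_mul (by positivity), mul_comm]
  rw [setLIntegral_congr_fun measurableSet_Ioo hcong]
  rw [← ofReal_integral_eq_lintegral_ofReal]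
  · -- integrability
    have key : ∀ u ∈ Ioo t0 (t0 + ψ),
        0 ≤ G0 u ∧ G0 u ≤ Gup (M - 1) 0 / (M - 1).factorial := by
      intro u hu
      have hut : 0 < u - t0 := by linarith [hu.1]
      have hu0 : 0 < u := h0.trans hu.1
      have huh : u ≤ ψ * u / (u - t0) := by
        rw [le_div_iff₀ hut]
        nlinarith [hu.2]
      have h1 : Gup (M - 1) (ψ * u / (u - t0)) ≤ Gup (M - 1) u := Gup_anti _ hu0.le huh
      have h2 : 0 ≤ Gup (M - 1) (ψ * u / (u - t0)) := Gup_nonneg _ (le_trans hu0.le huh)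
      have h3 : Gup (M - 1) u ≤ Gup (M - 1) 0 := Gup_anti _ le_rfl hu0.le
      constructor
      · rw [hG0]
        have : (0:ℝ) < (M - 1).factorial := by positivity
        apply div_nonneg (by linarith) (by positivity)
      · rw [hG0]
        have h5 : Gup (M - 1) u - Gup (M - 1) (ψ * u / (u - t0)) ≤ Gup (M - 1) 0 := by
          linarith
        rw [div_le_div_iff_of_pos_right (by positivity)]
        exact h5
    refine Measure.integrableOn_of_bounded (measure_Ioo_lt_top.ne)
      ((hGm.mul (by fun_prop)).aestronglyMeasurable)
      (M := Gup (M - 1) 0 / (M - 1).factorial * r) ?_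
    rw [ae_restrict_iff' measurableSet_Ioo]
    refine ae_of_all _ (fun u hu => ?_)
    have hu0 : 0 < u := h0.trans hu.1
    obtain ⟨hg1, hg2⟩ := key u hu
    have he1 : Real.exp (-(r * u)) ≤ 1 := by
      rw [Real.exp_le_one_iff]; nlinarith
    have he0 : 0 < Real.exp (-(r * u)) := Real.exp_pos _
    rw [Real.norm_eq_abs, abs_of_nonneg (by positivity)]
    have hre : r * Real.exp (-(r * u)) ≤ r := by nlinarith
    have h6 : G0 u * (r * Real.exp (-(r * u))) ≤ G0 u * r :=
      mul_le_mul_of_nonneg_left hre hg1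
    exact h6.trans (mul_le_mul_of_nonneg_right hg2 hr.le)
  · -- nonneg
    rw [Filter.EventuallyLE, ae_restrict_iff' measurableSet_Ioo]
    refine ae_of_all _ (fun u hu => ?_)
    have hut : 0 < u - t0 := by linarith [hu.1]
    have hu0 : 0 < u := h0.trans hu.1
    have huh : u ≤ ψ * u / (u - t0) := by
      rw [le_div_iff₀ hut]
      nlinarith [hu.2]
    have h1 : Gup (M - 1) (ψ * u / (u - t0)) ≤ Gup (M - 1) u := Gup_anti _ hu0.le huh
    have he0 : 0 < Real.exp (-(r * u)) := Real.exp_pos _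
    simp only [Pi.zero_apply, hG0]
    have h4 : (0:ℝ) < (M - 1).factorial := by positivity
    apply mul_nonneg (div_nonneg (by linarith) (by positivity)) (by positivity)


lemma R2 (M K : ℕ) (hM : 1 ≤ M) (hK : 2 ≤ K) {t0 φ : ℝ} (h0 : 0 < t0) (h1 : t0 < φ) :
    ∫ z in Ioo t0 φ, gInt (M - 1) z / (M - 1).factorial * Real.exp (-(((K:ℝ) - 1) * z))
      = ((∫ s in (0:ℝ)..((K:ℝ) * φ), gInt (M - 1) s)
          - ∫ s in (0:ℝ)..((K:ℝ) * t0), gInt (M - 1) s) / ((M - 1).factorial * (K : ℝ) ^ M) := by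
  have hKpos : (0:ℝ) < (K:ℝ) := by
    have : (0:ℕ) < K := lt_of_lt_of_le (by norm_num) hK
    exact_mod_cast this
  have hint : ∀ c d : ℝ, IntervalIntegrable (gInt (M-1)) volume c d :=
    fun c d => (gInt_cont (M-1)).intervalIntegrable c d
  have hdiff : (∫ s in (0:ℝ)..((K:ℝ) * φ), gInt (M - 1) s)
      - ∫ s in (0:ℝ)..((K:ℝ) * t0), gInt (M - 1) s
      = ∫ s in ((K:ℝ) * t0)..((K:ℝ) * φ), gInt (M - 1) s :=
    intervalIntegral.integral_interval_sub_left (hint _ _) (hint _ _)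
  have hsub : ∫ z in t0..φ, gInt (M-1) ((K:ℝ) * z)
      = (K:ℝ)⁻¹ • ∫ s in ((K:ℝ) * t0)..((K:ℝ) * φ), gInt (M - 1) s :=
    intervalIntegral.integral_comp_mul_left _ hKpos.ne'
  have hsub' : ∫ s in ((K:ℝ) * t0)..((K:ℝ) * φ), gInt (M - 1) s
      = (K:ℝ) * ∫ z in t0..φ, gInt (M-1) ((K:ℝ) * z) := by
    rw [hsub, smul_eq_mul, ← mul_assoc, mul_inv_cancel₀ hKpos.ne', one_mul]
  have hKM : (K:ℝ) * (K:ℝ) ^ (M - 1) = (K:ℝ) ^ M := by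
    rw [← pow_succ', Nat.sub_add_cancel hM]
  have hLHS : ∫ z in Ioo t0 φ, gInt (M - 1) z / (M - 1).factorial
        * Real.exp (-(((K:ℝ) - 1) * z))
      = (∫ z in t0..φ, gInt (M-1) ((K:ℝ) * z)) / ((M - 1).factorial * (K:ℝ) ^ (M-1)) := by
    rw [intervalIntegral.integral_of_le h1.le, integral_Ioc_eq_integral_Ioo, ← integral_div]
    refine setIntegral_congr_fun measurableSet_Ioo (fun z _ => ?_)
    have hexp : Real.exp (-z) * Real.exp (-(((K:ℝ)-1)*z)) = Real.exp (-((K:ℝ)*z)) := by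
      rw [← Real.exp_add]; congr 1; ring
    unfold gInt
    rw [mul_pow, ← hexp]
    have hfact : (0:ℝ) < (M-1).factorial := by positivity
    field_simp
  rw [hLHS, hdiff, hsub', ← hKM]
  have hfact : (0:ℝ) < (M-1).factorial := by positivity
  field_simp

lemma R3 (n : ℕ) (fact : ℝ) (hfact : 0 < fact) {r t0 ψ : ℝ}
    (hr : 0 < r) (h0 : 0 < t0) (hψ : 0 < ψ) :
    ∫ u in Ioo t0 (t0 + ψ), (Gup n u - Gup n (ψ * u / (u - t0))) / fact
        * (r * Real.exp (-(r * u)))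
      = ∫ x in (1/(ψ + t0))..(1/t0),
          ((if 0 < x then Gup n (1/x) / fact else 0)
            - (if 0 < (1/ψ - t0/ψ * x) then Gup n (1/(1/ψ - t0/ψ * x)) / fact else 0))
            * (r / x ^ 2) * Real.exp (-r / x) := by
  set A := 1/(ψ + t0) with hA
  set B := 1/t0 with hB
  have hA0 : 0 < A := by rw [hA]; positivity
  have hB0 : 0 < B := by rw [hB]; positivity
  have hAB : A < B := by
    rw [hA, hB]
    apply one_div_lt_one_div_of_lt h0
    linarith
  have hAinv : A⁻¹ = ψ + t0 := by rw [hA, one_div, inv_inv]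
  have hBinv : B⁻¹ = t0 := by rw [hB, one_div, inv_inv]
  have himg : (fun x : ℝ => x⁻¹) '' Ioo A B = Ioo t0 (t0 + ψ) := by
    ext y
    constructor
    · rintro ⟨x, hx, rfl⟩
      have hx0 : 0 < x := hA0.trans hx.1
      constructor
      · rw [← hBinv]; exact inv_strictAnti₀ hx0 hx.2
      · have := inv_strictAnti₀ hA0 hx.1
        rw [hAinv] at this; linarith
    · intro hy
      have hy0 : 0 < y := h0.trans hy.1
      refine ⟨y⁻¹, ⟨?_, ?_⟩, inv_inv y⟩
      · have : (t0 + ψ)⁻¹ < y⁻¹ := inv_strictAnti₀ hy0 (by linarith [hy.2])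
        rw [hA, one_div]
        rw [show ψ + t0 = t0 + ψ by ring]
        exact this
      · have := inv_strictAnti₀ h0 hy.1
        rw [hB, one_div]
        exact this
  have hderiv : ∀ x ∈ Ioo A B, HasDerivWithinAt (fun x : ℝ => x⁻¹)
      (-(x^2)⁻¹) (Ioo A B) x := by
    intro x hx
    exact (hasDerivAt_inv (hA0.trans hx.1).ne').hasDerivWithinAt
  have hinj : Set.InjOn (fun x : ℝ => x⁻¹) (Ioo A B) :=
    fun x _ y _ h => inv_injective h
  rw [← himg, MeasureTheory.integral_image_eq_integral_abs_deriv_smul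
    measurableSet_Ioo hderiv hinj]
  rw [intervalIntegral.integral_of_le hAB.le, integral_Ioc_eq_integral_Ioo]
  refine setIntegral_congr_fun measurableSet_Ioo (fun x hx => ?_)
  have hx0 : 0 < x := hA0.trans hx.1
  have hxB : x < B := hx.2
  have hxinv : t0 < x⁻¹ := by rw [← hBinv]; exact inv_strictAnti₀ hx0 hxB
  have ht0x : t0 * x < 1 := by
    have h2 := mul_lt_mul_of_pos_right hxinv hx0
    rw [inv_mul_cancel₀ hx0.ne'] at h2
    linarith
  have hy0 : 0 < 1/ψ - t0/ψ * x := by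
    rw [div_mul_eq_mul_div, ← sub_div]
    exact div_pos (by linarith) hψ
  have harg : ψ * x⁻¹ / (x⁻¹ - t0) = 1 / (1/ψ - t0/ψ * x) := by
    rw [div_eq_div_iff (by linarith) (by positivity)]
    field_simp
  have hxarg : x⁻¹ = 1 / x := (one_div x).symm
  rw [smul_eq_mul, if_pos hx0, if_pos hy0, harg, hxarg]
  rw [abs_neg, abs_of_pos (by positivity)]
  have hexp : -(r * (1/x)) = -r / x := by ring
  rw [hexp]
  field_simp


lemma gammaMeasure_Iic0 (a r : ℝ) : gammaMeasure a r (Iic 0) = 0 := by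
  rw [gammaMeasure, withDensity_apply _ measurableSet_Iic,
    setLIntegral_congr (Iio_ae_eq_Iic (a := (0:ℝ))).symm]
  exact lintegral_gammaPDF_of_nonpos le_rfl


end NomaAux

open NomaAux

set_option maxHeartbeats 1000000 in
/-- closed-form decomposition `P_N = Q₁ + Q₂ + Q₃` of the NOMA unicasting
outage probability, where `z ~ Gamma(M,1)` and `u ~ Exp(K−1)` are independent. -/
theorem noma_unicast_outage_probability
    (M K : ℕ) (hM : 1 ≤ M) (hK : 2 ≤ K)
    (ρ RM RU : ℝ) (hρ : 0 < ρ) (hRM : 0 < RM) (hRU : 0 < RU)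
    (εM εU φ ψ a b : ℝ)
    (hεM : εM = 2 ^ RM - 1) (hεU : εU = 2 ^ RU - 1)
    (hφ : φ = εM / ρ + εU * (1 + εM) / ρ) (hψ : ψ = εU * (1 + εM) / ρ)
    (ha : a = 1 / (ψ + εM / ρ)) (hb : b = ρ / εM)
    (f Γup γlow Ftil : ℝ → ℝ)
    (hf : ∀ y, f y = (y - εM / ρ) / (y * (1 + εM)))
    (hΓ : ∀ t, Γup t = ∫ s in Set.Ioi t, s ^ (M - 1) * Real.exp (-s))
    (hγ : ∀ t, γlow t = ∫ s in (0:ℝ)..t, s ^ (M - 1) * Real.exp (-s))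
    (hFtil : ∀ x, Ftil x = if 0 < x then Γup (1 / x) / (M - 1).factorial else 0)
    (μ : Measure (ℝ × ℝ))
    (hμ : μ = (gammaMeasure M 1).prod (expMeasure ((K : ℝ) - 1)))
    (PN : ℝ)
    (hPN : PN = (μ {p : ℝ × ℝ | p.1 * max 0 (min (f p.1) (f p.2)) < εU / ρ}).toReal) :
    PN =
      (1 - Γup (εM / ρ) / (M - 1).factorial * Real.exp (-((K : ℝ) - 1) * εM / ρ))
      + (γlow (K * φ) - γlow (K * εM / ρ)) / ((M - 1).factorial * (K : ℝ) ^ M)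
      + ∫ x in a..b,
          (Ftil x - Ftil (1 / ψ - (εM / (ρ * ψ)) * x)) *
            (((K : ℝ) - 1) / x ^ 2) * Real.exp (-((K : ℝ) - 1) / x) := by
  -- basic positivity facts
  have hεMpos : 0 < εM := by
    rw [hεM]
    have : (1:ℝ) < 2 ^ RM :=
      (Real.one_lt_rpow_iff_of_pos two_pos).mpr (Or.inl ⟨one_lt_two, hRM⟩)
    linarith
  have hεUpos : 0 < εU := by
    rw [hεU]
    have : (1:ℝ) < 2 ^ RU :=
      (Real.one_lt_rpow_iff_of_pos two_pos).mpr (Or.inl ⟨one_lt_two, hRU⟩)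
    linarith
  have hεM1 : (0:ℝ) < 1 + εM := by linarith
  have ht0 : 0 < εM / ρ := by positivity
  have hψpos : 0 < ψ := by rw [hψ]; positivity
  have hφeq : φ = εM / ρ + ψ := by rw [hφ, hψ]
  have hφgt : εM / ρ < φ := by rw [hφeq]; linarith
  have hψρ : ψ * ρ = εU * (1 + εM) := by rw [hψ]; field_simp
  have hKr : (2:ℝ) ≤ (K:ℝ) := by exact_mod_cast hK
  have hr : 0 < (K:ℝ) - 1 := by linarith
  have hM0 : (0:ℝ) < (M:ℝ) := by exact_mod_cast Nat.lt_of_lt_of_le Nat.zero_lt_one hM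
  haveI hPg : IsProbabilityMeasure (gammaMeasure (M:ℝ) 1) :=
    isProbabilityMeasure_gammaMeasure hM0 one_pos
  haveI hPe : IsProbabilityMeasure (expMeasure ((K:ℝ) - 1)) :=
    isProbabilityMeasure_expMeasure hr
  haveI hPμ : IsProbabilityMeasure μ := by rw [hμ]; infer_instance
  -- names for the sets
  set T : Set (ℝ × ℝ) := Ioi 0 ×ˢ Ioi 0 with hTdef
  set Q : Set (ℝ × ℝ) := Ioi (εM / ρ) ×ˢ Ioi (εM / ρ) with hQdef
  have hT0 : μ Tᶜ = 0 := by
    have hsub : Tᶜ ⊆ (Iic (0:ℝ) ×ˢ (univ : Set ℝ)) ∪ ((univ : Set ℝ) ×ˢ Iic (0:ℝ)) := by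
      intro p hp
      simp only [hTdef, mem_compl_iff, mem_prod, mem_Ioi, not_and_or, not_lt] at hp
      simp only [mem_union, mem_prod, mem_Iic, mem_univ, and_true, true_and]
      exact hp
    refine le_antisymm (le_trans (measure_mono hsub) ?_) (zero_le)
    refine le_trans (measure_union_le _ _) ?_
    rw [hμ, Measure.prod_prod, Measure.prod_prod, gammaMeasure_Iic0,
      expMeasure, gammaMeasure_Iic0]
    simp
  -- the pointwise event analysis
  have hkey : ∀ z u : ℝ, 0 < z → 0 < u →
      (z * max 0 (min (f z) (f u)) < εU / ρ ↔
        (¬(εM / ρ < z ∧ εM / ρ < u))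
        ∨ (εM / ρ < z ∧ z < εM / ρ + ψ ∧ z ≤ u)
        ∨ (εM / ρ < u ∧ u < z ∧ z * (u - εM / ρ) < ψ * u)) := by
    intro z u hz hu
    rw [hf z, hf u]
    by_cases hz1 : εM / ρ < z
    · by_cases hu1 : εM / ρ < u
      · have hfz : 0 < (z - εM/ρ)/(z*(1+εM)) := div_pos (by linarith) (by positivity)
        have hfu : 0 < (u - εM/ρ)/(u*(1+εM)) := div_pos (by linarith) (by positivity)
        rw [max_eq_right (le_min hfz.le hfu.le), mul_min_of_nonneg _ _ hz.le, min_lt_iff]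
        have e1 : z * ((z - εM/ρ)/(z*(1+εM))) = (z - εM/ρ)/(1+εM) := by
          rw [mul_div_assoc']
          rw [div_eq_div_iff (by positivity) (by positivity)]
          ring
        have e2 : z * ((u - εM/ρ)/(u*(1+εM))) = z * (u - εM/ρ)/(u*(1+εM)) := by
          ring
        rw [e1, e2]
        have i1 : (z - εM/ρ)/(1+εM) < εU/ρ ↔ z < εM/ρ + ψ := by
          rw [div_lt_div_iff₀ hεM1 hρ, ← hψρ, mul_lt_mul_iff_left₀ hρ]
          constructor <;> intro h <;> linarith
        have i2 : z * (u - εM/ρ)/(u*(1+εM)) < εU/ρ ↔ z * (u - εM/ρ) < ψ * u := by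
          rw [div_lt_div_iff₀ (by positivity) hρ,
            show εU*(u*(1+εM)) = ψ*u*ρ by linear_combination (-u) * hψρ,
            mul_lt_mul_iff_left₀ hρ]
        rw [i1, i2]
        constructor
        · rintro (h | h)
          · rcases le_or_gt z u with hzu | hzu
            · exact Or.inr (Or.inl ⟨hz1, h, hzu⟩)
            · refine Or.inr (Or.inr ⟨hu1, hzu, ?_⟩)
              have hx1 : (0:ℝ) < εM/ρ + ψ - z := by linarith
              have hx2 : 0 < u - εM/ρ := by linarith
              have hx3 : 0 < εM/ρ + ψ - u := by linarith
              nlinarith [mul_pos hx1 hx2, mul_pos ht0 hx3]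
          · rcases le_or_gt z u with hzu | hzu
            · refine Or.inr (Or.inl ⟨hz1, ?_, hzu⟩)
              by_contra hc
              push_neg at hc
              have hx2 : (0:ℝ) ≤ u - εM/ρ := by linarith
              have hx4 : (0:ℝ) ≤ z - (εM/ρ + ψ) := by linarith
              have hx5 : (0:ℝ) ≤ u - (εM/ρ + ψ) := by linarith
              nlinarith [mul_nonneg hx4 hx2, mul_nonneg ht0.le hx5]
            · exact Or.inr (Or.inr ⟨hu1, hzu, h⟩)
        · rintro (h | h | h)
          · exact absurd ⟨hz1, hu1⟩ h
          · exact Or.inl h.2.1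
          · exact Or.inr h.2.2
      · push_neg at hu1
        have hfu : (u - εM/ρ)/(u*(1+εM)) ≤ 0 :=
          div_nonpos_iff.mpr (Or.inr ⟨by linarith, by positivity⟩)
        rw [max_eq_left ((min_le_right _ _).trans hfu), mul_zero]
        constructor
        · intro _
          exact Or.inl (fun hc => (not_lt.mpr hu1) hc.2)
        · intro _
          positivity
    · push_neg at hz1
      have hfz : (z - εM/ρ)/(z*(1+εM)) ≤ 0 :=
        div_nonpos_iff.mpr (Or.inr ⟨by linarith, by positivity⟩)
      rw [max_eq_left ((min_le_left _ _).trans hfz), mul_zero]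
      constructor
      · intro _
        exact Or.inl (fun hc => (not_lt.mpr hz1) hc.1)
      · intro _
        positivity
  -- set decomposition
  have hST : {p : ℝ × ℝ | p.1 * max 0 (min (f p.1) (f p.2)) < εU / ρ} ∩ T
      = (Qᶜ ∩ T) ∪ ({p : ℝ × ℝ | εM/ρ < p.1 ∧ p.1 < εM/ρ + ψ ∧ p.1 ≤ p.2}
          ∪ {p : ℝ × ℝ | εM/ρ < p.2 ∧ p.2 < p.1 ∧ p.1 * (p.2 - εM/ρ) < ψ * p.2}) := by
    ext p
    obtain ⟨z, u⟩ := p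
    simp only [mem_inter_iff, mem_union, mem_setOf_eq, mem_compl_iff, hTdef, hQdef,
      mem_prod, mem_Ioi]
    constructor
    · rintro ⟨hs, hz, hu⟩
      rcases (hkey z u hz hu).mp hs with h | h | h
      · exact Or.inl ⟨h, hz, hu⟩
      · exact Or.inr (Or.inl h)
      · exact Or.inr (Or.inr h)
    · rintro (⟨hq, hz, hu⟩ | h | h)
      · exact ⟨(hkey z u hz hu).mpr (Or.inl hq), hz, hu⟩
      · have hz : 0 < z := lt_trans ht0 h.1
        have hu : 0 < u := lt_of_lt_of_le hz h.2.2
        exact ⟨(hkey z u hz hu).mpr (Or.inr (Or.inl h)), hz, hu⟩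
      · have hu : 0 < u := lt_trans ht0 h.1
        have hz : 0 < z := lt_trans hu h.2.1
        exact ⟨(hkey z u hz hu).mpr (Or.inr (Or.inr h)), hz, hu⟩
  have hQm : MeasurableSet Q := measurableSet_Ioi.prod measurableSet_Ioi
  have hS2m : MeasurableSet {p : ℝ × ℝ | εM/ρ < p.1 ∧ p.1 < εM/ρ + ψ ∧ p.1 ≤ p.2} := by
    refine MeasurableSet.inter ?_ (MeasurableSet.inter ?_ ?_)
    · exact measurableSet_lt measurable_const measurable_fst
    · exact measurableSet_lt measurable_fst measurable_const
    · exact measurableSet_le measurable_fst measurable_snd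
  have hS3m : MeasurableSet
      {p : ℝ × ℝ | εM/ρ < p.2 ∧ p.2 < p.1 ∧ p.1 * (p.2 - εM/ρ) < ψ * p.2} := by
    refine MeasurableSet.inter ?_ (MeasurableSet.inter ?_ ?_)
    · exact measurableSet_lt measurable_const measurable_snd
    · exact measurableSet_lt measurable_snd measurable_fst
    · exact measurableSet_lt (measurable_fst.mul (measurable_snd.sub measurable_const))
        (measurable_const.mul measurable_snd)
  have hd23 : Disjoint {p : ℝ × ℝ | εM/ρ < p.1 ∧ p.1 < εM/ρ + ψ ∧ p.1 ≤ p.2}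
      {p : ℝ × ℝ | εM/ρ < p.2 ∧ p.2 < p.1 ∧ p.1 * (p.2 - εM/ρ) < ψ * p.2} := by
    rw [Set.disjoint_left]
    rintro ⟨z, u⟩ h2 h3
    simp only [mem_setOf_eq] at h2 h3
    exact absurd h2.2.2 (not_le.mpr h3.2.1)
  have hd1 : Disjoint (Qᶜ ∩ T) ({p : ℝ × ℝ | εM/ρ < p.1 ∧ p.1 < εM/ρ + ψ ∧ p.1 ≤ p.2}
      ∪ {p : ℝ × ℝ | εM/ρ < p.2 ∧ p.2 < p.1 ∧ p.1 * (p.2 - εM/ρ) < ψ * p.2}) := by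
    rw [Set.disjoint_left]
    rintro ⟨z, u⟩ ⟨hq, _⟩ hs
    apply hq
    simp only [hQdef, mem_prod, mem_Ioi]
    rcases hs with h | h
    · simp only [mem_setOf_eq] at h
      exact ⟨h.1, lt_of_lt_of_le h.1 h.2.2⟩
    · simp only [mem_setOf_eq] at h
      exact ⟨lt_trans h.1 h.2.1, h.1⟩
  -- the measures of the pieces
  have hS2val : μ {p : ℝ × ℝ | εM/ρ < p.1 ∧ p.1 < εM/ρ + ψ ∧ p.1 ≤ p.2}
      = ENNReal.ofReal (∫ z in Ioo (εM/ρ) (εM/ρ + ψ),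
          gInt (M - 1) z / (M - 1).factorial * Real.exp (-(((K:ℝ) - 1) * z))) := by
    rw [hμ]
    exact measure_S2 M hM hr ht0 (by linarith)
  have hS3val : μ {p : ℝ × ℝ | εM/ρ < p.2 ∧ p.2 < p.1 ∧ p.1 * (p.2 - εM/ρ) < ψ * p.2}
      = ENNReal.ofReal (∫ u in Ioo (εM/ρ) (εM/ρ + ψ),
          (Gup (M - 1) u - Gup (M - 1) (ψ * u / (u - εM/ρ))) / (M - 1).factorial
            * (((K:ℝ) - 1) * Real.exp (-(((K:ℝ) - 1) * u)))) := by
    rw [hμ]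
    exact measure_S3 M hM hr ht0 hψpos
  have hQcval : μ (Qᶜ ∩ T) = 1 - μ Q := by
    rw [measure_inter_conull hT0, prob_compl_eq_one_sub hQm]
  have hsum : μ {p : ℝ × ℝ | p.1 * max 0 (min (f p.1) (f p.2)) < εU / ρ}
      = (1 - μ Q)
        + (ENNReal.ofReal (∫ z in Ioo (εM/ρ) (εM/ρ + ψ),
            gInt (M - 1) z / (M - 1).factorial * Real.exp (-(((K:ℝ) - 1) * z)))
          + ENNReal.ofReal (∫ u in Ioo (εM/ρ) (εM/ρ + ψ),
            (Gup (M - 1) u - Gup (M - 1) (ψ * u / (u - εM/ρ))) / (M - 1).factorial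
              * (((K:ℝ) - 1) * Real.exp (-(((K:ℝ) - 1) * u))))) := by
    rw [← measure_inter_conull (s := {p : ℝ × ℝ | p.1 * max 0 (min (f p.1) (f p.2)) < εU / ρ}) hT0,
      hST, measure_union hd1 (hS2m.union hS3m), measure_union hd23 hS3m,
      hQcval, hS2val, hS3val]
  have hQval : μ Q = ENNReal.ofReal (Gup (M-1) (εM/ρ) / (M-1).factorial
      * Real.exp (-(((K:ℝ)-1) * (εM/ρ)))) := by
    rw [hμ, hQdef, Measure.prod_prod, gammaMeasure_Ioi M hM ht0.le,
      expMeasure_Ioi hr ht0.le, ← ENNReal.ofReal_mul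
      (div_nonneg (Gup_nonneg _ ht0.le) (Nat.cast_nonneg _))]
  -- nonnegativity of the two integrals
  have hI2nn : 0 ≤ ∫ z in Ioo (εM/ρ) (εM/ρ + ψ),
      gInt (M - 1) z / (M - 1).factorial * Real.exp (-(((K:ℝ) - 1) * z)) := by
    refine setIntegral_nonneg measurableSet_Ioo (fun z hz => ?_)
    have hz0 : (0:ℝ) ≤ z := le_trans ht0.le hz.1.le
    have hg : gInt (M-1) z = z ^ (M-1) * Real.exp (-z) := rfl
    have : 0 ≤ gInt (M-1) z := by rw [hg]; positivity
    positivity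
  have hI3nn : 0 ≤ ∫ u in Ioo (εM/ρ) (εM/ρ + ψ),
      (Gup (M - 1) u - Gup (M - 1) (ψ * u / (u - εM/ρ))) / (M - 1).factorial
        * (((K:ℝ) - 1) * Real.exp (-(((K:ℝ) - 1) * u))) := by
    refine setIntegral_nonneg measurableSet_Ioo (fun u hu => ?_)
    have hut : 0 < u - εM/ρ := by linarith [hu.1]
    have hu0 : 0 < u := lt_trans ht0 hu.1
    have huh : u ≤ ψ * u / (u - εM/ρ) := by
      rw [le_div_iff₀ hut]
      nlinarith [hu.2]
    have h1 := Gup_anti (M-1) hu0.le huh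
    have h4 : (0:ℝ) < (M - 1).factorial := by positivity
    have he0 := (Real.exp_pos (-(((K:ℝ)-1) * u))).le
    apply mul_nonneg (div_nonneg (by linarith) (by positivity)) (by positivity)
  have hQnn : (0:ℝ) ≤ Gup (M-1) (εM/ρ) / (M-1).factorial
      * Real.exp (-(((K:ℝ)-1) * (εM/ρ))) :=
    mul_nonneg (div_nonneg (Gup_nonneg _ ht0.le) (Nat.cast_nonneg _)) (Real.exp_pos _).le
  have hfin1 : (1 - μ Q) ≠ ⊤ := ne_top_of_le_ne_top ENNReal.one_ne_top tsub_le_self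
  have hQle : μ Q ≤ 1 := prob_le_one
  rw [hPN, hsum, ENNReal.toReal_add hfin1
    (ENNReal.add_ne_top.mpr ⟨ENNReal.ofReal_ne_top, ENNReal.ofReal_ne_top⟩),
    ENNReal.toReal_add ENNReal.ofReal_ne_top ENNReal.ofReal_ne_top,
    ENNReal.toReal_ofReal hI2nn, ENNReal.toReal_ofReal hI3nn,
    ENNReal.toReal_sub_of_le hQle ENNReal.one_ne_top, ENNReal.toReal_one, hQval,
    ENNReal.toReal_ofReal hQnn]
  -- rewrite the target into the computed form
  have hΓG : Γup = Gup (M-1) := funext fun t => (hΓ t).trans rfl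
  have hγG : γlow = fun t => ∫ s in (0:ℝ)..t, gInt (M-1) s :=
    funext fun t => (hγ t).trans rfl
  have hFtilG : Ftil = fun x => if 0 < x then Gup (M-1) (1/x) / (M - 1).factorial else 0 := by
    funext x; rw [hFtil x, hΓG]
  simp only [hΓG, hγG, hFtilG]
  rw [hφeq, ha, hb]
  have e4 : (-((K:ℝ)-1) * εM / ρ) = (-(((K:ℝ)-1) * (εM/ρ))) := by ring
  have e5 : ((K:ℝ) * εM / ρ) = ((K:ℝ) * (εM/ρ)) := by ring
  rw [e4, e5]
  have hR2 := R2 M K hM hK ht0 (show εM/ρ < εM/ρ + ψ by linarith)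
  have hR3 := R3 (M-1) ((M-1).factorial : ℝ) (by positivity) hr ht0 hψpos
  rw [one_div_div] at hR3
  simp only [div_div] at hR3
  rw [hR2, hR3]
  ring
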